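/- Suppose v : J → ℂⁿ (J ⊂ ℝ an interval) is a pointwise limit of a uniformly bounded sequence of continuous maps, and λ ∈ C(I,ℂⁿ)*. Then for each t in any subinterval J₀ with [t-h,t] ⊂ J, the segment v_t (defined by v_t(s)=v(t+s), s ∈ [-h,0]) lies in B_{nA}, and the map t ↦ λ_e v_t on J₀ is itself the pointwise limit of a uniformly bounded sequence of continuous functions J₀ → ℂ. -/

import Mathlib

open MeasureTheory Filter Topology

/-- Property (A): pointwise limit of a uniformly bounded sequence of continuous maps. -/
def PropA {X : Type*} [TopologicalSpace X] {E : Type*} [NormedAddCommGroup E]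
    (φ : X → E) : Prop :=
  ∃ f : ℕ → X → E, (∀ m, Continuous (f m)) ∧ (∃ C : ℝ, ∀ m x, ‖f m x‖ ≤ C) ∧
    ∀ x, Tendsto (fun m => f m x) atTop (𝓝 (φ x))

/-- If `v : J → ℂⁿ` has property (A) and `λ ∈ C(I,ℂⁿ)*` (with its
extension `λ_e` given by componentwise integration against the Riesz
representation measures), then for each `t ∈ J₀` (where `[t-h,t] ⊆ J`) the
segment `v_t` lies in `B_{nA}`, and `t ↦ λ_e v_t` has property (A) on `J₀`. -/
theorem stmt_5 (n : ℕ) (h : ℝ) (hh : 0 < h)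
    (J J₀ : Set ℝ) (hJ : J.OrdConnected) (hJ₀ : J₀.OrdConnected)
    (hJJ : ∀ t ∈ J₀, Set.Icc (t - h) t ⊆ J)
    (v : ℝ → Fin n → ℂ) (hv : PropA fun x : J => v x)
    (T : C(Set.Icc (-h) (0:ℝ), Fin n → ℂ) →L[ℂ] ℂ)
    (ν : Fin n → Measure (Set.Icc (-h) (0:ℝ))) (hν : ∀ k, IsFiniteMeasure (ν k))
    (H : Fin n → Set.Icc (-h) (0:ℝ) → ℂ)
    (hHm : ∀ k, Measurable (H k)) (hH1 : ∀ k t, ‖H k t‖ = 1)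
    (hrep : ∀ f : C(Set.Icc (-h) (0:ℝ), Fin n → ℂ),
      T f = ∑ k : Fin n, ∫ t, f t k * H k t ∂(ν k)) :
    (∀ t ∈ J₀, PropA fun s : Set.Icc (-h) (0:ℝ) => v (t + ↑s)) ∧
      PropA fun t : J₀ => ∑ k : Fin n, ∫ s, v (↑t + ↑s) k * H k s ∂(ν k) := by
  obtain ⟨f, hfc, ⟨C, hC⟩, hfl⟩ := hv
  haveI := hν
  have hCk : ∀ m (x : J) (k : Fin n), ‖f m x k‖ ≤ C := fun m x k =>
    le_trans (norm_le_pi_norm _ k) (hC m x)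
  have hmem : ∀ t ∈ J₀, ∀ s : Set.Icc (-h) (0:ℝ), t + ↑s ∈ J := by
    intro t ht s
    exact hJJ t ht ⟨by linarith [s.2.1], by linarith [s.2.2]⟩
  constructor
  · intro t ht
    refine ⟨fun m s => f m ⟨t + ↑s, hmem t ht s⟩, fun m => ?_,
      ⟨C, fun m s => hC m _⟩, fun s => hfl _⟩
    exact (hfc m).comp
      (Continuous.subtype_mk (continuous_const.add continuous_subtype_val) _)
  · -- the sequence of approximating functions on J₀
    refine ⟨fun m t => ∑ k : Fin n,
        ∫ s, f m ⟨(t : ℝ) + ↑s, hmem t t.2 s⟩ k * H k s ∂(ν k), ?_, ?_, ?_⟩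
    · -- continuity
      intro m
      apply continuous_finset_sum
      intro k _
      apply continuous_of_dominated (bound := fun _ => C)
      · intro t
        refine AEStronglyMeasurable.mul ?_ (hHm k).aestronglyMeasurable
        exact (((continuous_apply k).comp ((hfc m).comp
          (Continuous.subtype_mk (continuous_const.add continuous_subtype_val)
            _))).aestronglyMeasurable)
      · intro t
        refine Filter.Eventually.of_forall fun s => ?_
        rw [norm_mul, hH1 k s, mul_one]
        exact hCk m _ k
      · exact integrable_const C
      · refine Filter.Eventually.of_forall fun s => ?_
        refine Continuous.mul ?_ continuous_const
        exact (continuous_apply k).comp ((hfc m).comp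
          (Continuous.subtype_mk
            ((continuous_subtype_val).add continuous_const) _))
    · -- uniform bound
      refine ⟨∑ k : Fin n, ((ν k) Set.univ).toReal * C, fun m t => ?_⟩
      refine le_trans (norm_sum_le _ _) (Finset.sum_le_sum fun k _ => ?_)
      have := norm_integral_le_of_norm_le (μ := ν k)
        (f := fun s => f m ⟨(t : ℝ) + ↑s, hmem t t.2 s⟩ k * H k s)
        (integrable_const C) (Filter.Eventually.of_forall fun s => by
          rw [norm_mul, hH1 k s, mul_one]; exact hCk m _ k)
      simpa [integral_const, smul_eq_mul, measureReal_def] using this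
    · -- pointwise convergence
      intro t
      apply tendsto_finset_sum
      intro k _
      apply tendsto_integral_of_dominated_convergence (fun _ => C)
      · intro m
        refine AEStronglyMeasurable.mul ?_ (hHm k).aestronglyMeasurable
        exact (((continuous_apply k).comp ((hfc m).comp
          (Continuous.subtype_mk (continuous_const.add continuous_subtype_val)
            _))).aestronglyMeasurable)
      · exact integrable_const C
      · intro m
        refine Filter.Eventually.of_forall fun s => ?_
        rw [norm_mul, hH1 k s, mul_one]
        exact hCk m _ k
      · refine Filter.Eventually.of_forall fun s => ?_
        exact (((continuous_apply k).tendsto _).comp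
          (hfl ⟨(t : ℝ) + ↑s, hmem t t.2 s⟩)).mul tendsto_const_nhds
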